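/- For n ≥ 2 and every k ≥ 0, the number of permutations σ of [n] that avoid both 123 and 132, satisfy σ(n−1)=1, and have exactly k crossings equals the binomial coefficient C(n−2, k). -/

import Mathlib

open Finset Polynomial Equiv

attribute [local instance] Classical.propDecidable

def isCrossing {n : ℕ} (σ : Equiv.Perm (Fin n)) (i j : Fin n) : Prop :=
  (i < j ∧ j < σ i ∧ σ i < σ j) ∨ (σ i < σ j ∧ σ j ≤ i ∧ i < j)

noncomputable def crs {n : ℕ} (σ : Equiv.Perm (Fin n)) : ℕ :=
  (Finset.univ.filter (fun p : Fin n × Fin n => isCrossing σ p.1 p.2)).card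

def avoids123 {n : ℕ} (σ : Equiv.Perm (Fin n)) : Prop :=
  ¬ ∃ i j k : Fin n, i < j ∧ j < k ∧ σ i < σ j ∧ σ j < σ k

def avoids132 {n : ℕ} (σ : Equiv.Perm (Fin n)) : Prop :=
  ¬ ∃ i j k : Fin n, i < j ∧ j < k ∧ σ i < σ k ∧ σ k < σ j

def avoids213 {n : ℕ} (σ : Equiv.Perm (Fin n)) : Prop :=
  ¬ ∃ i j k : Fin n, i < j ∧ j < k ∧ σ j < σ i ∧ σ i < σ k

def avoids231 {n : ℕ} (σ : Equiv.Perm (Fin n)) : Prop :=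
  ¬ ∃ i j k : Fin n, i < j ∧ j < k ∧ σ k < σ i ∧ σ i < σ j

def avoids312 {n : ℕ} (σ : Equiv.Perm (Fin n)) : Prop :=
  ¬ ∃ i j k : Fin n, i < j ∧ j < k ∧ σ j < σ k ∧ σ k < σ i

def avoids321 {n : ℕ} (σ : Equiv.Perm (Fin n)) : Prop :=
  ¬ ∃ i j k : Fin n, i < j ∧ j < k ∧ σ k < σ j ∧ σ j < σ i

noncomputable def ut {n : ℕ} (σ : Equiv.Perm (Fin n)) : ℕ :=
  (Finset.univ.filter (fun i : Fin n => σ⁻¹ i < i ∧ i < σ i)).card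

noncomputable def lt' {n : ℕ} (σ : Equiv.Perm (Fin n)) : ℕ :=
  (Finset.univ.filter (fun i : Fin n => σ i < i ∧ i < σ⁻¹ i)).card


namespace Cnt

open Finset Equiv

/-- Rank function for the "centrality" order on `{0,…,w}`. -/
def rr (w z : ℕ) : ℕ := if 2*z < w then 2*z+1 else 2*(w - z)

lemma rr_lt_iff {w i z : ℕ} (hi : i ≤ w) (hz : z ≤ w) :
    rr w i < rr w z ↔ ((i < z ∧ i + z < w) ∨ (z < i ∧ w ≤ i + z)) := by
  unfold rr; split_ifs <;> omega

lemma rr_inj {w i z : ℕ} (hi : i ≤ w) (hz : z ≤ w) (h : rr w i = rr w z) : i = z := by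
  unfold rr at h; split_ifs at h <;> omega

lemma rr_le {w z : ℕ} (hz : z ≤ w) : rr w z ≤ w := by
  unfold rr; split_ifs <;> omega

lemma rr_pos {w z : ℕ} (hz : z < w) : 1 ≤ rr w z := by
  unfold rr; split_ifs <;> omega

lemma rr_surj {w v : ℕ} (h1 : 1 ≤ v) (h2 : v ≤ w) : ∃ z, z < w ∧ rr w z = v := by
  refine ⟨if v % 2 = 1 then v / 2 else w - v / 2, ?_, ?_⟩
  · split_ifs <;> omega
  · unfold rr; split_ifs <;> omega

variable {n : ℕ}

/-- `σ` has the canonical structure associated to the zero-set `Z`. -/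
structure Good (σ : Perm (Fin n)) (Z : Finset (Fin n)) : Prop where
  hsub : ∀ z ∈ Z, (z : ℕ) < n - 2
  hoff : ∀ i : Fin n, (i : ℕ) ≤ n - 2 → i ∉ Z → (σ i : ℕ) + (i : ℕ) = n - 2
  hmin : ∀ b ∈ Z, (∀ z ∈ Z, ¬ z < b) → (σ b : ℕ) = n - 1
  hprev : ∀ b ∈ Z, ∀ a ∈ Z, a < b → (∀ z ∈ Z, z < b → z ≤ a) →
      (σ b : ℕ) + (a : ℕ) = n - 2
  hlast0 : ∀ i : Fin n, (i : ℕ) = n - 1 → Z = ∅ → (σ i : ℕ) = n - 1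
  hlastm : ∀ i : Fin n, (i : ℕ) = n - 1 → ∀ a ∈ Z, (∀ z ∈ Z, z ≤ a) →
      (σ i : ℕ) + (a : ℕ) = n - 2

/-- The set of "counted" positions: left endpoints of crossings. -/
noncomputable def cntSet (Z : Finset (Fin n)) : Finset (Fin n) :=
  univ.filter (fun i : Fin n => i ∉ Z ∧ (i : ℕ) ≠ n - 1 ∧
    ((∃ z ∈ Z, i < z ∧ (i : ℕ) + (z : ℕ) < n - 2) ∨
     (∃ z ∈ Z, z < i ∧ n - 2 ≤ (i : ℕ) + (z : ℕ))))

/-- Zero set of a permutation. -/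
noncomputable def Zset (σ : Perm (Fin n)) : Finset (Fin n) :=
  univ.filter (fun i : Fin n => (i : ℕ) < n - 2 ∧ (σ i : ℕ) + (i : ℕ) ≠ n - 2)

section GoodConseq

variable {σ : Perm (Fin n)} {Z : Finset (Fin n)} (hg : Good σ Z)

include hg

lemma Good.valcase (b : Fin n) (hb : b ∈ Z) :
    (σ b : ℕ) = n - 1 ∨ ∃ a ∈ Z, a < b ∧ (∀ z ∈ Z, z < b → z ≤ a) ∧
      (σ b : ℕ) + (a : ℕ) = n - 2 := by
  by_cases h : (Z.filter (fun x => x < b)).Nonempty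
  · right
    have hmem := Finset.max'_mem _ h
    rw [Finset.mem_filter] at hmem
    have hmax : ∀ z ∈ Z, z < b → z ≤ (Z.filter (fun x => x < b)).max' h := by
      intro z hz hzb
      exact Finset.le_max' (Z.filter (fun x => x < b)) z (Finset.mem_filter.mpr ⟨hz, hzb⟩)
    exact ⟨_, hmem.1, hmem.2, hmax, hg.hprev b hb _ hmem.1 hmem.2 hmax⟩
  · left
    exact hg.hmin b hb (fun z hz hzb => h ⟨z, Finset.mem_filter.mpr ⟨hz, hzb⟩⟩)

lemma Good.vallast (i : Fin n) (hi : (i : ℕ) = n - 1) :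
    ((σ i : ℕ) = n - 1 ∧ Z = ∅) ∨ ∃ a ∈ Z, (∀ z ∈ Z, z ≤ a) ∧
      (σ i : ℕ) + (a : ℕ) = n - 2 := by
  by_cases h : Z.Nonempty
  · right
    refine ⟨Z.max' h, Finset.max'_mem _ h, fun z hz => Finset.le_max' _ z hz, ?_⟩
    exact hg.hlastm i hi _ (Finset.max'_mem _ h) (fun z hz => Finset.le_max' _ z hz)
  · left
    have : Z = ∅ := Finset.not_nonempty_iff_eq_empty.mp h
    exact ⟨hg.hlast0 i hi this, this⟩

/-- Lower bound: every value sits at or above the antidiagonal. -/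
lemma Good.lb (i : Fin n) : n - 2 ≤ (σ i : ℕ) + (i : ℕ) := by
  by_cases hiL : (i : ℕ) = n - 1
  · omega
  · have hle : (i : ℕ) ≤ n - 2 := by have := i.isLt; omega
    by_cases hiZ : i ∈ Z
    · rcases hg.valcase i hiZ with h | ⟨a, _, hab, _, h⟩
      · omega
      · have : (a : ℕ) < (i : ℕ) := hab
        omega
    · exact le_of_eq (hg.hoff i hle hiZ).symm

/-- Upper bound: a zero element strictly below `j` caps the value of `j`. -/
lemma Good.ub (j z : Fin n) (hz : z ∈ Z) (hzj : z < j) :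
    (σ j : ℕ) + (z : ℕ) ≤ n - 2 := by
  by_cases hjL : (j : ℕ) = n - 1
  · rcases hg.vallast j hjL with ⟨_, hZ⟩ | ⟨a, haZ, hmax, h⟩
    · rw [hZ] at hz; simp at hz
    · have : (z : ℕ) ≤ (a : ℕ) := hmax z hz
      omega
  · have hle : (j : ℕ) ≤ n - 2 := by have := j.isLt; omega
    by_cases hjZ : j ∈ Z
    · have h : (Z.filter (fun x => x < j)).Nonempty := ⟨z, Finset.mem_filter.mpr ⟨hz, hzj⟩⟩
      have hmem := Finset.max'_mem _ h
      rw [Finset.mem_filter] at hmem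
      have hmax : ∀ x ∈ Z, x < j → x ≤ (Z.filter (fun x => x < j)).max' h := by
        intro x hx hxj
        exact Finset.le_max' (Z.filter (fun y => y < j)) x (Finset.mem_filter.mpr ⟨hx, hxj⟩)
      have hval := hg.hprev j hjZ _ hmem.1 hmem.2 hmax
      have hza : (z : ℕ) ≤ ((Z.filter (fun x => x < j)).max' h : ℕ) := hmax z hz hzj
      omega
    · have := hg.hoff j hle hjZ
      have hzv : (z : ℕ) < (j : ℕ) := hzj
      omega

/-- If `σ` increases from `i` to `j`, then `j` is in `Z ∪ {n-1}` and the gap is empty. -/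
lemma Good.mono {i j : Fin n} (hij : i < j) (hinc : (σ i : ℕ) < (σ j : ℕ)) :
    ((j : ℕ) = n - 1 ∨ j ∈ Z) ∧ ∀ z ∈ Z, ¬(i < z ∧ z < j) := by
  constructor
  · by_contra h
    push_neg at h
    obtain ⟨hjL, hjZ⟩ := h
    have h1 := hg.hoff j (by have := j.isLt; omega) hjZ
    have h2 := hg.lb i
    have : (i : ℕ) < (j : ℕ) := hij
    omega
  · rintro z hz ⟨hiz, hzj⟩
    have h1 := hg.ub j z hz hzj
    have h2 := hg.lb i
    have : (i : ℕ) < (z : ℕ) := hiz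
    omega

lemma Good.avoids : avoids123 σ ∧ avoids132 σ := by
  have key : ∀ i j k : Fin n, i < j → j < k → σ i < σ j → σ i < σ k → False := by
    intro i j k hij hjk h1 h2
    have m1 := hg.mono hij h1
    have m2 := hg.mono (lt_trans hij hjk) h2
    have hjL : (j : ℕ) ≠ n - 1 := by
      have : (j : ℕ) < (k : ℕ) := hjk
      have := k.isLt; omega
    have hjZ : j ∈ Z := m1.1.resolve_left hjL
    exact m2.2 j hjZ ⟨hij, hjk⟩
  constructor
  · rintro ⟨i, j, k, hij, hjk, h1, h2⟩
    exact key i j k hij hjk h1 (lt_trans h1 h2)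
  · rintro ⟨i, j, k, hij, hjk, h1, h2⟩
    exact key i j k hij hjk (lt_trans h1 h2) h1

end GoodConseq

section StructureThm

variable {σ : Perm (Fin n)}

lemma card_filter_val_lt (m : ℕ) (hm : m ≤ n) :
    (univ.filter fun i : Fin n => (i : ℕ) < m).card = m := by
  have h := Finset.card_bij (s := univ.filter fun i : Fin n => (i : ℕ) < m)
    (t := Finset.range m) (fun (i : Fin n) _ => (i : ℕ))
    (fun a ha => Finset.mem_range.mpr (Finset.mem_filter.mp ha).2)
    (fun a _ b _ hab => Fin.ext hab)
    (fun b hb => ⟨⟨b, by have := Finset.mem_range.mp hb; omega⟩,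
      Finset.mem_filter.mpr ⟨Finset.mem_univ _, Finset.mem_range.mp hb⟩, rfl⟩)
  rw [h, Finset.card_range]

lemma family_lb (hn : 2 ≤ n) (h123 : avoids123 σ) (h132 : avoids132 σ) (i : Fin n) :
    n - 2 ≤ (σ i : ℕ) + (i : ℕ) := by
  by_contra hcon
  push_neg at hcon
  have hikey : ∀ j k : Fin n, i < j → j < k → σ i < σ j → σ i < σ k → False := by
    intro j k hij hjk h1 h2
    rcases lt_trichotomy (σ j) (σ k) with h | h | h
    · exact h123 ⟨i, j, k, hij, hjk, h1, h⟩
    · exact absurd (σ.injective h) (ne_of_lt hjk)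
    · exact h132 ⟨i, j, k, hij, hjk, h2, h⟩
  -- count positions with larger values
  have hUval : (univ.filter fun v : Fin n => (σ i : ℕ) < (v : ℕ)).card
      = n - 1 - (σ i : ℕ) := by
    have h1 := Finset.card_filter_add_card_filter_not
      (s := (univ : Finset (Fin n))) (p := fun v : Fin n => (v : ℕ) < (σ i : ℕ) + 1)
    have h2 : (univ.filter fun v : Fin n => (v : ℕ) < (σ i : ℕ) + 1).card
        = (σ i : ℕ) + 1 := card_filter_val_lt _ (by have := (σ i).isLt; omega)
    have h3 : (univ.filter fun v : Fin n => ¬ ((v : ℕ) < (σ i : ℕ) + 1)) =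
        (univ.filter fun v : Fin n => (σ i : ℕ) < (v : ℕ)) := by
      apply Finset.filter_congr; intro v _; simp
    rw [h3, h2] at h1
    simp only [Finset.card_univ, Fintype.card_fin] at h1
    omega
  have hU : (univ.filter fun p : Fin n => (σ i : ℕ) < (σ p : ℕ)).card
      = n - 1 - (σ i : ℕ) := by
    rw [← hUval]
    apply Finset.card_bij (fun (p : Fin n) _ => σ p)
    · intro a ha
      exact Finset.mem_filter.mpr ⟨Finset.mem_univ _, (Finset.mem_filter.mp ha).2⟩
    · intro a _ b _ hab
      exact σ.injective hab
    · intro v hv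
      exact ⟨σ.symm v, Finset.mem_filter.mpr ⟨Finset.mem_univ _, by
        simpa using (Finset.mem_filter.mp hv).2⟩, by simp⟩
  set T := univ.filter (fun p : Fin n => i < p ∧ σ i < σ p) with hTdef
  have hsub : (univ.filter fun p : Fin n => (σ i : ℕ) < (σ p : ℕ)) ⊆
      T ∪ univ.filter (fun p : Fin n => (p : ℕ) < (i : ℕ)) := by
    intro p hp
    have hp' := (Finset.mem_filter.mp hp).2
    rcases lt_trichotomy i p with h | h | h
    · exact Finset.mem_union_left _ (Finset.mem_filter.mpr
        ⟨Finset.mem_univ _, h, by rwa [Fin.lt_def]⟩)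
    · exfalso; rw [h] at hp'; omega
    · exact Finset.mem_union_right _ (Finset.mem_filter.mpr
        ⟨Finset.mem_univ _, by rwa [← Fin.lt_def]⟩)
  have hcard : 2 ≤ T.card := by
    have h1 := Finset.card_le_card hsub
    have h2 := Finset.card_union_le T (univ.filter (fun p : Fin n => (p : ℕ) < (i : ℕ)))
    have h3 : (univ.filter fun p : Fin n => (p : ℕ) < (i : ℕ)).card = (i : ℕ) :=
      card_filter_val_lt _ (by have := i.isLt; omega)
    have := i.isLt; have := (σ i).isLt
    omega
  obtain ⟨a, ha, b, hb, hab⟩ := Finset.one_lt_card.mp (by omega : 1 < T.card)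
  have ha' := (Finset.mem_filter.mp ha).2
  have hb' := (Finset.mem_filter.mp hb).2
  rcases lt_or_gt_of_ne hab with h | h
  · exact hikey a b ha'.1 h ha'.2 hb'.2
  · exact hikey b a hb'.1 h hb'.2 ha'.2

lemma mem_Zset {i : Fin n} :
    i ∈ Zset σ ↔ (i : ℕ) < n - 2 ∧ (σ i : ℕ) + (i : ℕ) ≠ n - 2 := by
  simp [Zset]

lemma family_good (hn : 2 ≤ n) (h123 : avoids123 σ) (h132 : avoids132 σ)
    (h0 : σ (⟨n - 2, Nat.sub_lt_self two_pos hn⟩ : Fin n) = (⟨0, Nat.lt_of_lt_of_le two_pos hn⟩ : Fin n)) :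
    Good σ (Zset σ) := by
  have hoff' : ∀ i : Fin n, (i : ℕ) ≤ n - 2 → i ∉ Zset σ →
      (σ i : ℕ) + (i : ℕ) = n - 2 := by
    intro i hle hiZ
    rcases eq_or_lt_of_le hle with h | h
    · have : i = (⟨n - 2, by omega⟩ : Fin n) := Fin.ext h
      rw [this, h0]
      simpa using h.symm
    · rw [mem_Zset] at hiZ
      push_neg at hiZ
      exact hiZ h
  have V2 : ∀ m : ℕ, ∀ b ∈ Zset σ, (b : ℕ) < m →
      ((∀ z ∈ Zset σ, ¬ z < b) → (σ b : ℕ) = n - 1) ∧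
      (∀ a ∈ Zset σ, a < b → (∀ z ∈ Zset σ, z < b → z ≤ a) →
        (σ b : ℕ) + (a : ℕ) = n - 2) := by
    intro m
    induction m with
    | zero => intro b _ h; omega
    | succ m ih =>
      intro b hbZ hbm
      have hb2 : (b : ℕ) < n - 2 := (mem_Zset.mp hbZ).1
      have hbne : (σ b : ℕ) + (b : ℕ) ≠ n - 2 := (mem_Zset.mp hbZ).2
      have hlb := family_lb hn h123 h132 b
      have hvb : (σ b : ℕ) = n - 1 ∨ ∃ p : Fin n, p ∈ Zset σ ∧ (p : ℕ) < (b : ℕ) ∧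
          (σ b : ℕ) + (p : ℕ) = n - 2 := by
        by_cases hv : (σ b : ℕ) = n - 1
        · left; exact hv
        · right
          have hvle : (σ b : ℕ) ≤ n - 2 := by have := (σ b).isLt; omega
          refine ⟨⟨n - 2 - (σ b : ℕ), by omega⟩, ?_, by simp; omega, by simp; omega⟩
          by_contra hpZ
          have hval := hoff' ⟨n - 2 - (σ b : ℕ), by omega⟩ (by simp) hpZ
          have heq : σ (⟨n - 2 - (σ b : ℕ), by omega⟩ : Fin n) = σ b := by
            apply Fin.ext
            simp only [Fin.val_mk] at hval ⊢
            omega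
          have := σ.injective heq
          have hcoe : n - 2 - (σ b : ℕ) = (b : ℕ) := congrArg Fin.val this
          omega
      constructor
      · intro hminhyp
        rcases hvb with h | ⟨p, hpZ, hpb, _⟩
        · exact h
        · exact absurd (Fin.lt_def.mpr hpb) (hminhyp p hpZ)
      · intro a haZ hab hmaxhyp
        rcases hvb with h | ⟨p, hpZ, hpb, hval⟩
        · exfalso
          have hne : (Zset σ).Nonempty := ⟨a, haZ⟩
          set m0 := (Zset σ).min' hne with hm0
          have hm0Z := (Zset σ).min'_mem hne
          have hm0a : m0 ≤ a := Finset.min'_le _ a haZ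
          have hm0b : (m0 : ℕ) < (b : ℕ) := lt_of_le_of_lt hm0a (Fin.lt_def.mp hab)
          have := (ih m0 hm0Z (by omega)).1
            (fun z hz hzl => absurd (Finset.min'_le _ z hz) (not_le_of_gt hzl))
          have heq : σ m0 = σ b := Fin.ext (by omega)
          have : m0 = b := σ.injective heq
          rw [this] at hm0b; omega
        · have hpa : p ≤ a := hmaxhyp p hpZ (Fin.lt_def.mpr hpb)
          rcases lt_or_eq_of_le hpa with hlt | heq
          · exfalso
            have hne : ((Zset σ).filter (fun x => p < x)).Nonempty :=
              ⟨a, Finset.mem_filter.mpr ⟨haZ, hlt⟩⟩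
            set q := ((Zset σ).filter (fun x => p < x)).min' hne with hq
            have hqmem := Finset.min'_mem _ hne
            rw [Finset.mem_filter] at hqmem
            have hqa : q ≤ a := Finset.min'_le _ a (Finset.mem_filter.mpr ⟨haZ, hlt⟩)
            have hqb : (q : ℕ) < (b : ℕ) := lt_of_le_of_lt hqa (Fin.lt_def.mp hab)
            have hstep := (ih q hqmem.1 (by omega)).2 p hpZ hqmem.2
              (fun z hz hzq => by
                by_contra hzp
                push_neg at hzp
                exact absurd (Finset.min'_le _ z (Finset.mem_filter.mpr ⟨hz, hzp⟩))
                  (not_le_of_gt hzq))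
            have heq2 : σ q = σ b := Fin.ext (by omega)
            have : q = b := σ.injective heq2
            rw [this] at hqb; omega
          · rw [← heq]
            exact hval
  have V2' := fun b hb => V2 n b hb b.isLt
  refine ⟨?_, hoff', fun b hb h => (V2' b hb).1 h, fun b hb => (V2' b hb).2, ?_, ?_⟩
  · intro z hz; exact (mem_Zset.mp hz).1
  · -- hlast0
    intro i hi hZ
    by_contra hv
    have hvle : (σ i : ℕ) ≤ n - 2 := by have := (σ i).isLt; omega
    have hpZ : (⟨n - 2 - (σ i : ℕ), by omega⟩ : Fin n) ∉ Zset σ := by rw [hZ]; simp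
    have hval := hoff' _ (by simp) hpZ
    have heq : σ (⟨n - 2 - (σ i : ℕ), by omega⟩ : Fin n) = σ i := by
      apply Fin.ext
      simp only [Fin.val_mk] at hval ⊢
      omega
    have := congrArg Fin.val (σ.injective heq)
    simp only [Fin.val_mk] at this
    omega
  · -- hlastm
    intro i hi a haZ hamax
    have ha2 : (a : ℕ) < n - 2 := (mem_Zset.mp haZ).1
    set x := σ.symm (⟨n - 2 - (a : ℕ), by omega⟩ : Fin n) with hx
    have hsx : σ x = ⟨n - 2 - (a : ℕ), by omega⟩ := σ.apply_symm_apply _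
    have hxval : (σ x : ℕ) = n - 2 - (a : ℕ) := by rw [hsx]
    have hxi : x = i := by
      by_contra hne
      have hxle : (x : ℕ) ≤ n - 2 := by
        have h1 := x.isLt
        have : (x : ℕ) ≠ n - 1 := fun h => hne (Fin.ext (h.trans hi.symm))
        omega
      by_cases hxZ : x ∈ Zset σ
      · by_cases hfe : ((Zset σ).filter (fun z => z < x)).Nonempty
        · have hmem := Finset.max'_mem _ hfe
          rw [Finset.mem_filter] at hmem
          have hM := (V2' x hxZ).2 _ hmem.1 hmem.2
            (fun z hz hzx => Finset.le_max' ((Zset σ).filter (fun z => z < x)) z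
              (Finset.mem_filter.mpr ⟨hz, hzx⟩))
          -- σ x + M = n − 2 and σ x = n−2−a  ⟹ M = a ⟹ a < x, but x ≤ a
          have hMa : ((((Zset σ).filter (fun z => z < x)).max' hfe : Fin n) : ℕ) = (a : ℕ) := by
            omega
          have hxlea : x ≤ a := hamax x hxZ
          have haM : a < x := by
            rw [Fin.lt_def, ← hMa]
            exact Fin.lt_def.mp hmem.2
          exact absurd hxlea (not_le_of_gt haM)
        · have := (V2' x hxZ).1 (fun z hz hzx => hfe ⟨z, Finset.mem_filter.mpr ⟨hz, hzx⟩⟩)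
          omega
      · have := hoff' x hxle hxZ
        -- σ x + x = n−2, σ x = n−2−a ⟹ x = a, but a ∈ Z, x ∉ Z
        have : x = a := Fin.ext (by omega)
        rw [this] at hxZ
        exact hxZ haZ
    rw [← hxi, hxval]
    omega

end StructureThm

section Construction

def rhoFun (n : ℕ) : Fin n → Fin n := fun i =>
  if (i : ℕ) = n - 1 then i else ⟨n - 2 - (i : ℕ), by have := i.isLt; omega⟩

lemma rhoFun_invol (hn : 2 ≤ n) : ∀ i, rhoFun n (rhoFun n i) = i := by
  intro i
  unfold rhoFun
  by_cases h : (i : ℕ) = n - 1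
  · simp [h]
  · have hlt := i.isLt
    rw [if_neg h, if_neg (by simp; omega)]
    apply Fin.ext; simp; omega

def rho (hn : 2 ≤ n) : Perm (Fin n) :=
  ⟨rhoFun n, rhoFun n, rhoFun_invol hn, rhoFun_invol hn⟩

lemma rho_apply_ne (hn : 2 ≤ n) (i : Fin n) (h : (i : ℕ) ≠ n - 1) :
    ((rho hn i : Fin n) : ℕ) = n - 2 - (i : ℕ) := by
  show ((rhoFun n i : Fin n) : ℕ) = _
  unfold rhoFun
  rw [if_neg h]

lemma rho_apply_last (hn : 2 ≤ n) (i : Fin n) (h : (i : ℕ) = n - 1) :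
    ((rho hn i : Fin n) : ℕ) = n - 1 := by
  show ((rhoFun n i : Fin n) : ℕ) = _
  unfold rhoFun
  rw [if_pos h, h]

def cl (L0 : Fin n) : List (Fin n) → Perm (Fin n)
  | [] => 1
  | x :: t => Equiv.swap x L0 * cl L0 t

lemma cl_not_mem (L0 : Fin n) : ∀ l : List (Fin n), ∀ i : Fin n,
    i ∉ l → i ≠ L0 → cl L0 l i = i := by
  intro l
  induction l with
  | nil => intro i _ _; rfl
  | cons x t ih =>
    intro i hi hiL
    have h1 : i ∉ t := fun h => hi (List.mem_cons_of_mem _ h)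
    have h2 : i ≠ x := fun h => hi (h ▸ List.mem_cons_self)
    show Equiv.swap x L0 (cl L0 t i) = i
    rw [ih i h1 hiL]
    exact Equiv.swap_apply_of_ne_of_ne h2 hiL

lemma cl_min (L0 : Fin n) : ∀ l : List (Fin n), l.Pairwise (· < ·) →
    (∀ x ∈ l, x < L0) → ∀ b ∈ l, (∀ z ∈ l, ¬ z < b) → cl L0 l b = L0 := by
  intro l hsort hlt b hb hmin
  match l, hb with
  | x :: t, hb =>
    rcases List.mem_cons.mp hb with rfl | hbt
    · show Equiv.swap b L0 (cl L0 t b) = L0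
      have hbnt : b ∉ t := fun h => lt_irrefl b ((List.pairwise_cons.mp hsort).1 b h)
      rw [cl_not_mem L0 t b hbnt (ne_of_lt (hlt b hb))]
      exact Equiv.swap_apply_left _ _
    · exact absurd ((List.pairwise_cons.mp hsort).1 b hbt)
        (hmin x (List.mem_cons_self))

lemma cl_prev (L0 : Fin n) : ∀ l : List (Fin n), l.Pairwise (· < ·) →
    (∀ x ∈ l, x < L0) → ∀ b ∈ l, ∀ a ∈ l, a < b → (∀ z ∈ l, z < b → z ≤ a) →
    cl L0 l b = a := by
  intro l
  induction l with
  | nil => intro _ _ b hb; exact absurd hb List.not_mem_nil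
  | cons x t ih =>
    intro hsort hlt b hb a ha hab hamax
    have hcons := List.pairwise_cons.mp hsort
    rcases List.mem_cons.mp hb with rfl | hbt
    · exfalso
      rcases List.mem_cons.mp ha with rfl | hat
      · exact lt_irrefl a hab
      · exact absurd hab (not_lt_of_gt (hcons.1 a hat))
    · show Equiv.swap x L0 (cl L0 t b) = a
      rcases List.mem_cons.mp ha with rfl | hat
      · -- a = x : b is minimal in t
        have hmt : ∀ z ∈ t, ¬ z < b := by
          intro z hz hzb
          exact absurd (hamax z (List.mem_cons_of_mem _ hz) hzb)
            (not_le_of_gt (hcons.1 z hz))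
        rw [cl_min L0 t hcons.2 (fun y hy => hlt y (List.mem_cons_of_mem _ hy)) b hbt hmt]
        exact Equiv.swap_apply_right _ _
      · have := ih hcons.2 (fun y hy => hlt y (List.mem_cons_of_mem _ hy)) b hbt a hat hab
          (fun z hz hzb => hamax z (List.mem_cons_of_mem _ hz) hzb)
        rw [this]
        exact Equiv.swap_apply_of_ne_of_ne (ne_of_gt (hcons.1 a hat))
          (ne_of_lt (hlt a ha))

lemma cl_L0_nil (L0 : Fin n) : cl L0 [] L0 = L0 := rfl

lemma cl_L0_max (L0 : Fin n) : ∀ l : List (Fin n), l.Pairwise (· < ·) →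
    (∀ x ∈ l, x < L0) → ∀ a ∈ l, (∀ z ∈ l, z ≤ a) → cl L0 l L0 = a := by
  intro l
  induction l with
  | nil => intro _ _ a ha; exact absurd ha List.not_mem_nil
  | cons x t ih =>
    intro hsort hlt a ha hamax
    have hcons := List.pairwise_cons.mp hsort
    show Equiv.swap x L0 (cl L0 t L0) = a
    match t with
    | [] =>
      rcases List.mem_cons.mp ha with rfl | hat
      · rw [cl_L0_nil]
        exact Equiv.swap_apply_right _ _
      · exact absurd hat List.not_mem_nil
    | y :: t' =>
      have hat : a ∈ y :: t' := by
        rcases List.mem_cons.mp ha with rfl | hat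
        · exact absurd (hamax y (List.mem_cons_of_mem _ (List.mem_cons_self)))
            (not_le_of_gt (hcons.1 y (List.mem_cons_self)))
        · exact hat
      rw [ih hcons.2 (fun z hz => hlt z (List.mem_cons_of_mem _ hz)) a hat
        (fun z hz => hamax z (List.mem_cons_of_mem _ hz))]
      exact Equiv.swap_apply_of_ne_of_ne (ne_of_gt (hcons.1 a hat))
        (ne_of_lt (hlt a ha))

noncomputable def sigmaZ (hn : 2 ≤ n) (Z : Finset (Fin n)) : Perm (Fin n) :=
  rho hn * cl (⟨n - 1, by omega⟩ : Fin n) (Z.sort (· ≤ ·))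

lemma sigmaZ_good (hn : 2 ≤ n) (Z : Finset (Fin n))
    (hsub : ∀ z ∈ Z, (z : ℕ) < n - 2) : Good (sigmaZ hn Z) Z := by
  set L0 : Fin n := ⟨n - 1, by omega⟩ with hL0
  set l := Z.sort (· ≤ ·) with hl
  have hsort : l.Pairwise (· < ·) := Z.sortedLT_sort.pairwise
  have hmem : ∀ x, x ∈ l ↔ x ∈ Z := fun x => Finset.mem_sort _
  have hlt : ∀ x ∈ l, x < L0 := by
    intro x hx
    rw [Fin.lt_def]
    have := hsub x ((hmem x).mp hx)
    simp only [hL0]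
    omega
  have happ : ∀ i, sigmaZ hn Z i = rho hn (cl L0 l i) := fun i => rfl
  constructor
  · exact hsub
  · intro i hle hiZ
    rw [happ, cl_not_mem L0 l i (fun h => hiZ ((hmem i).mp h))
      (fun h => by have h2 : (i : ℕ) = n - 1 := congrArg Fin.val h; omega)]
    rw [rho_apply_ne hn i (by omega)]
    omega
  · intro b hbZ hbmin
    rw [happ, cl_min L0 l hsort hlt b ((hmem b).mpr hbZ)
      (fun z hz => hbmin z ((hmem z).mp hz))]
    exact rho_apply_last hn L0 rfl
  · intro b hbZ a haZ hab hamax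
    rw [happ, cl_prev L0 l hsort hlt b ((hmem b).mpr hbZ) a ((hmem a).mpr haZ) hab
      (fun z hz => hamax z ((hmem z).mp hz))]
    have ha2 := hsub a haZ
    rw [rho_apply_ne hn a (by omega)]
    omega
  · intro i hi hZ
    have hiL : i = L0 := Fin.ext (by simp [hL0]; omega)
    have hlnil : l = [] := by rw [hl, hZ]; exact Finset.sort_empty _
    rw [happ, hiL, hlnil, cl_L0_nil]
    exact rho_apply_last hn L0 rfl
  · intro i hi a haZ hamax
    have hiL : i = L0 := Fin.ext (by simp [hL0]; omega)
    rw [happ, hiL, cl_L0_max L0 l hsort hlt a ((hmem a).mpr haZ)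
      (fun z hz => hamax z ((hmem z).mp hz))]
    have ha2 := hsub a haZ
    rw [rho_apply_ne hn a (by omega)]
    omega

end Construction

section Unique

variable {σ σ₁ σ₂ : Perm (Fin n)} {Z : Finset (Fin n)}

lemma Good.Zset_eq (hg : Good σ Z) (hn : 2 ≤ n) : Zset σ = Z := by
  ext i
  rw [mem_Zset]
  constructor
  · rintro ⟨hlt, hne⟩
    by_contra hiZ
    exact hne (hg.hoff i (by omega) hiZ)
  · intro hiZ
    refine ⟨hg.hsub i hiZ, ?_⟩
    rcases hg.valcase i hiZ with h | ⟨a, _, hab, _, h⟩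
    · omega
    · have : (a : ℕ) < (i : ℕ) := hab
      omega

lemma good_unique (hn : 2 ≤ n) (hg1 : Good σ₁ Z) (hg2 : Good σ₂ Z) : σ₁ = σ₂ := by
  apply Equiv.ext
  intro i
  apply Fin.ext
  by_cases hi : (i : ℕ) = n - 1
  · by_cases hZ : Z.Nonempty
    · have h1 := hg1.hlastm i hi _ (Z.max'_mem hZ) (fun z hz => Z.le_max' z hz)
      have h2 := hg2.hlastm i hi _ (Z.max'_mem hZ) (fun z hz => Z.le_max' z hz)
      omega
    · have hZ' := Finset.not_nonempty_iff_eq_empty.mp hZ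
      rw [hg1.hlast0 i hi hZ', hg2.hlast0 i hi hZ']
  · by_cases hiZ : i ∈ Z
    · by_cases hfe : (Z.filter (fun x => x < i)).Nonempty
      · have hmemf := Finset.max'_mem _ hfe
        rw [Finset.mem_filter] at hmemf
        have hmax : ∀ z ∈ Z, z < i → z ≤ (Z.filter (fun x => x < i)).max' hfe := by
          intro z hz hzi
          exact Finset.le_max' (Z.filter (fun x => x < i)) z (Finset.mem_filter.mpr ⟨hz, hzi⟩)
        have h1 := hg1.hprev i hiZ _ hmemf.1 hmemf.2 hmax
        have h2 := hg2.hprev i hiZ _ hmemf.1 hmemf.2 hmax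
        omega
      · have hmin : ∀ z ∈ Z, ¬ z < i :=
          fun z hz hzi => hfe ⟨z, Finset.mem_filter.mpr ⟨hz, hzi⟩⟩
        rw [hg1.hmin i hiZ hmin, hg2.hmin i hiZ hmin]
    · have hle : (i : ℕ) ≤ n - 2 := by have := i.isLt; omega
      have h1 := hg1.hoff i hle hiZ
      have h2 := hg2.hoff i hle hiZ
      omega

end Unique

section Crossing

variable {σ : Perm (Fin n)} {Z : Finset (Fin n)}

/-- Canonical description of crossings. -/
def RHSpred (Z : Finset (Fin n)) (i j : Fin n) : Prop :=
  i ∉ Z ∧ (i : ℕ) ≠ n - 1 ∧ i < j ∧ ((j : ℕ) = n - 1 ∨ j ∈ Z) ∧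
    (∀ z ∈ Z, ¬(i < z ∧ z < j)) ∧
    ((∃ z ∈ Z, i < z ∧ (i : ℕ) + (z : ℕ) < n - 2) ∨
     (∃ z ∈ Z, z < i ∧ n - 2 ≤ (i : ℕ) + (z : ℕ)))

lemma Good.noinc (hg : Good σ Z) (hn : 2 ≤ n) {i j : Fin n} (hiZ : i ∈ Z) (hij : i < j) :
    (σ j : ℕ) < (σ i : ℕ) := by
  have hub := hg.ub j i hiZ hij
  rcases hg.valcase i hiZ with h | ⟨a, _, hab, _, h⟩
  · omega
  · have hai : (a : ℕ) < (i : ℕ) := hab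
    have hii : (i : ℕ) < n - 2 := hg.hsub i hiZ
    omega

lemma Good.gapval1 (hg : Good σ Z) (hn : 2 ≤ n) {i j : Fin n} (hiZ : i ∉ Z) (hij : i < j)
    (hjm : (j : ℕ) = n - 1 ∨ j ∈ Z) (hgap : ∀ z ∈ Z, ¬(i < z ∧ z < j))
    (hfe : (Z.filter (fun x => x < i)).Nonempty) :
    (σ j : ℕ) + (((Z.filter (fun x => x < i)).max' hfe : Fin n) : ℕ) = n - 2 := by
  have hzlt : ∀ z ∈ Z, z < j → z < i := by
    intro z hz hzj
    rcases lt_trichotomy z i with h | h | h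
    · exact h
    · exact absurd (h ▸ hz) hiZ
    · exact absurd ⟨h, hzj⟩ (hgap z hz)
  have hmemf := Finset.max'_mem _ hfe
  rw [Finset.mem_filter] at hmemf
  have hmax : ∀ z ∈ Z, z < i → z ≤ (Z.filter (fun x => x < i)).max' hfe := by
    intro z hz hzi
    exact Finset.le_max' (Z.filter (fun x => x < i)) z (Finset.mem_filter.mpr ⟨hz, hzi⟩)
  rcases hjm with hj | hjZ
  · exact hg.hlastm j hj _ hmemf.1
      (fun z hz => hmax z hz (hzlt z hz (Fin.lt_def.mpr (by
        have := hg.hsub z hz; omega))))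
  · exact hg.hprev j hjZ _ hmemf.1 (lt_trans hmemf.2 hij)
      (fun z hz hzj => hmax z hz (hzlt z hz hzj))

lemma Good.gapval2 (hg : Good σ Z) (hn : 2 ≤ n) {i j : Fin n} (hiZ : i ∉ Z) (hij : i < j)
    (hjm : (j : ℕ) = n - 1 ∨ j ∈ Z) (hgap : ∀ z ∈ Z, ¬(i < z ∧ z < j))
    (hfe : ¬ (Z.filter (fun x => x < i)).Nonempty) :
    (σ j : ℕ) = n - 1 := by
  have hzlt : ∀ z ∈ Z, z < j → z < i := by
    intro z hz hzj
    rcases lt_trichotomy z i with h | h | h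
    · exact h
    · exact absurd (h ▸ hz) hiZ
    · exact absurd ⟨h, hzj⟩ (hgap z hz)
  rcases hjm with hj | hjZ
  · have hZe : Z = ∅ := by
      rw [← Finset.not_nonempty_iff_eq_empty]
      rintro ⟨z, hz⟩
      exact hfe ⟨z, Finset.mem_filter.mpr ⟨hz, hzlt z hz (Fin.lt_def.mpr (by
        have := hg.hsub z hz; omega))⟩⟩
    exact hg.hlast0 j hj hZe
  · exact hg.hmin j hjZ (fun z hz hzj =>
      hfe ⟨z, Finset.mem_filter.mpr ⟨hz, hzlt z hz hzj⟩⟩)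

lemma crossing_iff (hn : 2 ≤ n) (hg : Good σ Z) (i j : Fin n) :
    isCrossing σ i j ↔ RHSpred Z i j := by
  constructor
  · intro hc
    have hij : i < j := by
      rcases hc with ⟨h, _, _⟩ | ⟨_, _, h⟩ <;> exact h
    have hinc : (σ i : ℕ) < (σ j : ℕ) := by
      rcases hc with ⟨_, _, h⟩ | ⟨h, _, _⟩ <;> exact Fin.lt_def.mp h
    have hiL : (i : ℕ) ≠ n - 1 := by
      have h1 := Fin.lt_def.mp hij
      have h2 := j.isLt
      omega
    have hiZ : i ∉ Z := fun h => absurd hinc (not_lt_of_gt (hg.noinc hn h hij))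
    have hmono := hg.mono hij hinc
    have hσi : (σ i : ℕ) + (i : ℕ) = n - 2 := hg.hoff i (by have := i.isLt; omega) hiZ
    refine ⟨hiZ, hiL, hij, hmono.1, hmono.2, ?_⟩
    rcases hc with ⟨_, hjlt, _⟩ | ⟨_, hjle, _⟩
    · -- type A
      have hjσ : (j : ℕ) < (σ i : ℕ) := Fin.lt_def.mp hjlt
      have hjZ : j ∈ Z := by
        rcases hmono.1 with h | h
        · exfalso; have := (σ i).isLt; omega
        · exact h
      exact Or.inl ⟨j, hjZ, hij, by omega⟩
    · -- type B
      have hjσ : (σ j : ℕ) ≤ (i : ℕ) := Fin.le_def.mp hjle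
      by_cases hfe : (Z.filter (fun x => x < i)).Nonempty
      · have hval := hg.gapval1 hn hiZ hij hmono.1 hmono.2 hfe
        have hmemf := Finset.max'_mem _ hfe
        rw [Finset.mem_filter] at hmemf
        exact Or.inr ⟨_, hmemf.1, hmemf.2, by omega⟩
      · have hval := hg.gapval2 hn hiZ hij hmono.1 hmono.2 hfe
        exfalso
        have := i.isLt
        omega
  · rintro ⟨hiZ, hiL, hij, hjm, hgap, hcond⟩
    have hσi : (σ i : ℕ) + (i : ℕ) = n - 2 := hg.hoff i (by have := i.isLt; omega) hiZ
    rcases hcond with ⟨z, hz, hiz, hsum⟩ | ⟨z, hz, hzi, hsum⟩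
    · -- type A
      have hjz : (j : ℕ) ≤ (z : ℕ) := by
        have h := hgap z hz
        rcases lt_trichotomy z j with h' | h' | h'
        · exact absurd ⟨hiz, h'⟩ h
        · exact le_of_eq (congrArg Fin.val h'.symm)
        · exact le_of_lt (Fin.lt_def.mp h')
      have hizn : (i : ℕ) < (z : ℕ) := hiz
      have hσj : (σ i : ℕ) < (σ j : ℕ) := by
        by_cases hfe : (Z.filter (fun x => x < i)).Nonempty
        · have hval := hg.gapval1 hn hiZ hij hjm hgap hfe
          have hmemf := Finset.max'_mem _ hfe
          rw [Finset.mem_filter] at hmemf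
          have hai : (((Z.filter (fun x => x < i)).max' hfe : Fin n) : ℕ) < (i : ℕ) :=
            hmemf.2
          omega
        · have hval := hg.gapval2 hn hiZ hij hjm hgap hfe
          omega
      exact Or.inl ⟨hij, Fin.lt_def.mpr (by omega), Fin.lt_def.mpr hσj⟩
    · -- type B
      have hfe : (Z.filter (fun x => x < i)).Nonempty :=
        ⟨z, Finset.mem_filter.mpr ⟨hz, hzi⟩⟩
      have hval := hg.gapval1 hn hiZ hij hjm hgap hfe
      have hza : (z : ℕ) ≤ (((Z.filter (fun x => x < i)).max' hfe : Fin n) : ℕ) :=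
        Finset.le_max' (Z.filter (fun x => x < i)) z (Finset.mem_filter.mpr ⟨hz, hzi⟩)
      have hmemf := Finset.max'_mem _ hfe
      rw [Finset.mem_filter] at hmemf
      have hai : (((Z.filter (fun x => x < i)).max' hfe : Fin n) : ℕ) < (i : ℕ) :=
        hmemf.2
      exact Or.inr ⟨Fin.lt_def.mpr (by omega), Fin.le_def.mpr (by omega), hij⟩

lemma rhs_unique {i j₁ j₂ : Fin n} (h1 : RHSpred Z i j₁) (h2 : RHSpred Z i j₂) :
    j₁ = j₂ := by
  by_contra hne
  have key : ∀ a b : Fin n, RHSpred Z i a → RHSpred Z i b → a < b → False := by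
    intro a b ha hb hab
    have haZ : a ∈ Z := by
      rcases ha.2.2.2.1 with h | h
      · exfalso
        have h1 := Fin.lt_def.mp hab
        have h2 := b.isLt
        omega
      · exact h
    exact hb.2.2.2.2.1 a haZ ⟨ha.2.2.1, hab⟩
  rcases lt_or_gt_of_ne hne with h | h
  · exact key j₁ j₂ h1 h2 h
  · exact key j₂ j₁ h2 h1 h

lemma rhs_exists (hn : 2 ≤ n) {i : Fin n} (hi : i ∈ cntSet Z) :
    ∃ j : Fin n, RHSpred Z i j := by
  rw [cntSet, Finset.mem_filter] at hi
  obtain ⟨-, hiZ, hiL, hcond⟩ := hi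
  by_cases hfe : (Z.filter (fun x => i < x)).Nonempty
  · refine ⟨(Z.filter (fun x => i < x)).min' hfe, ?_⟩
    have hmemf := Finset.min'_mem _ hfe
    rw [Finset.mem_filter] at hmemf
    refine ⟨hiZ, hiL, hmemf.2, Or.inr hmemf.1, ?_, hcond⟩
    intro z hz ⟨hiz, hzj⟩
    exact absurd (Finset.min'_le (Z.filter (fun x => i < x)) z
      (Finset.mem_filter.mpr ⟨hz, hiz⟩)) (not_le_of_gt hzj)
  · refine ⟨⟨n - 1, by omega⟩, ?_⟩
    refine ⟨hiZ, hiL, Fin.lt_def.mpr (by simp; have := i.isLt; omega), Or.inl rfl, ?_, hcond⟩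
    intro z hz ⟨hiz, _⟩
    exact hfe ⟨z, Finset.mem_filter.mpr ⟨hz, hiz⟩⟩

lemma crs_good (hn : 2 ≤ n) (hg : Good σ Z) : crs σ = (cntSet Z).card := by
  unfold crs
  apply Finset.card_bij (fun (p : Fin n × Fin n) _ => p.1)
  · intro p hp
    have hc := (Finset.mem_filter.mp hp).2
    rw [crossing_iff hn hg] at hc
    rw [cntSet, Finset.mem_filter]
    exact ⟨Finset.mem_univ _, hc.1, hc.2.1, hc.2.2.2.2.2⟩
  · intro p hp q hq hpq
    have hcp := (Finset.mem_filter.mp hp).2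
    have hcq := (Finset.mem_filter.mp hq).2
    rw [crossing_iff hn hg] at hcp hcq
    have : p.2 = q.2 := rhs_unique hcp (hpq ▸ hcq)
    exact Prod.ext hpq this
  · intro i hi
    obtain ⟨j, hj⟩ := rhs_exists hn hi
    exact ⟨(i, j), Finset.mem_filter.mpr ⟨Finset.mem_univ _,
      (crossing_iff hn hg i j).mpr hj⟩, rfl⟩

end Crossing

section Counting

/-- rank map on `Fin n`. -/
abbrev rw (n : ℕ) (z : Fin n) : ℕ := rr (n - 2) (z : ℕ)

lemma cntSet_empty : cntSet (∅ : Finset (Fin n)) = ∅ := by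
  ext i
  simp [cntSet]

lemma cnt_card (hn : 2 ≤ n) {Z : Finset (Fin n)} (hsub : ∀ z ∈ Z, (z : ℕ) < n - 2)
    (hne : Z.Nonempty) :
    (cntSet Z).card + Z.card = Z.sup (rw n) + 1 := by
  set R := Z.sup (rw n) with hR
  obtain ⟨z0, hz0Z, hz0⟩ := Finset.exists_mem_eq_sup Z hne (rw n)
  have hle : ∀ z ∈ Z, rw n z ≤ R := fun z hz => Finset.le_sup hz
  have hz0' : R = rw n z0 := hR.trans hz0
  have hRle : R ≤ n - 2 := by
    rw [hz0']; exact rr_le (by have := hsub z0 hz0Z; omega)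
  have hRpos : 1 ≤ R := by
    rw [hz0']; exact rr_pos (hsub z0 hz0Z)
  set A := univ.filter (fun i : Fin n => (i : ℕ) ≤ n - 2 ∧ rr (n - 2) (i : ℕ) < R) with hA
  set B := Z.filter (fun z : Fin n => rr (n - 2) (z : ℕ) < R) with hB
  have hBA : B ⊆ A := by
    intro z hz
    rw [hB, Finset.mem_filter] at hz
    rw [hA, Finset.mem_filter]
    exact ⟨Finset.mem_univ _, by have := hsub z hz.1; omega, hz.2⟩
  have hclaim1 : cntSet Z = A \ B := by
    ext i
    rw [cntSet, Finset.mem_filter, Finset.mem_sdiff, hA, hB, Finset.mem_filter,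
      Finset.mem_filter]
    constructor
    · rintro ⟨-, hiZ, hiL, hcond⟩
      have hile : (i : ℕ) ≤ n - 2 := by have := i.isLt; omega
      have hrlt : rr (n - 2) (i : ℕ) < R := by
        rcases hcond with ⟨z, hz, h1, h2⟩ | ⟨z, hz, h1, h2⟩
        · have ha := hle z hz
          have hb := (rr_lt_iff hile (by have := hsub z hz; omega)).mpr
            (Or.inl ⟨Fin.lt_def.mp h1, h2⟩)
          simp only [rw] at ha
          omega
        · have ha := hle z hz
          have hb := (rr_lt_iff hile (by have := hsub z hz; omega)).mpr
            (Or.inr ⟨Fin.lt_def.mp h1, h2⟩)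
          simp only [rw] at ha
          omega
      exact ⟨⟨Finset.mem_univ _, hile, hrlt⟩, fun h => hiZ h.1⟩
    · rintro ⟨⟨-, hile, hrlt⟩, hnB⟩
      have hiZ : i ∉ Z := fun h => hnB ⟨h, hrlt⟩
      refine ⟨Finset.mem_univ _, hiZ, by omega, ?_⟩
      have hz0lt : rr (n - 2) (i : ℕ) < rr (n - 2) (z0 : ℕ) := by
        have h' : rw n z0 = R := hz0'.symm
        simp only [rw] at h'
        omega
      rcases (rr_lt_iff hile (by have := hsub z0 hz0Z; omega)).mp hz0lt with h | h
      · exact Or.inl ⟨z0, hz0Z, Fin.lt_def.mpr h.1, h.2⟩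
      · exact Or.inr ⟨z0, hz0Z, Fin.lt_def.mpr h.1, h.2⟩
  have hcardA : A.card = R := by
    have h := Finset.card_bij (s := A) (t := Finset.range R)
      (fun (i : Fin n) _ => rr (n - 2) (i : ℕ))
      (fun a ha => Finset.mem_range.mpr (Finset.mem_filter.mp ha).2.2)
      (fun a ha b hb hab => by
        have h1 := (Finset.mem_filter.mp ha).2.1
        have h2 := (Finset.mem_filter.mp hb).2.1
        exact Fin.ext (rr_inj h1 h2 hab))
      (fun v hv => by
        rw [Finset.mem_range] at hv
        by_cases hv0 : v = 0
        · refine ⟨⟨n - 2, by omega⟩, ?_, ?_⟩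
          · rw [hA, Finset.mem_filter]
            refine ⟨Finset.mem_univ _, by simp, ?_⟩
            have : rr (n - 2) (n - 2) = 0 := by unfold rr; split_ifs <;> omega
            simp only [Fin.val_mk]
            omega
          · have : rr (n - 2) (n - 2) = 0 := by unfold rr; split_ifs <;> omega
            simp only [Fin.val_mk]
            omega
        · obtain ⟨z, hz1, hz2⟩ := rr_surj (by omega) (by omega : v ≤ n - 2)
          refine ⟨⟨z, by omega⟩, ?_, ?_⟩
          · rw [hA, Finset.mem_filter]
            exact ⟨Finset.mem_univ _, by simp; omega, by simp only [Fin.val_mk]; omega⟩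
          · simp only [Fin.val_mk]; omega)
    rw [h, Finset.card_range]
  have hcardB : B.card + 1 = Z.card := by
    have hBer : B = Z.erase z0 := by
      ext z
      rw [hB, Finset.mem_filter, Finset.mem_erase]
      constructor
      · rintro ⟨hz, hlt⟩
        refine ⟨?_, hz⟩
        rintro rfl
        have h' : rw n z = R := hz0'.symm
        simp only [rw] at h'
        omega
      · rintro ⟨hne', hz⟩
        refine ⟨hz, ?_⟩
        have h1 := hle z hz
        simp only [rw] at h1
        rcases lt_or_eq_of_le h1 with h | h
        · exact h
        · exfalso
          apply hne'
          apply Fin.ext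
          apply rr_inj (w := n - 2) (by have := hsub z hz; omega)
            (by have := hsub z0 hz0Z; omega)
          have h' : rw n z0 = R := hz0'.symm
          simp only [rw] at h'
          omega
    rw [hBer, Finset.card_erase_of_mem hz0Z]
    have : 1 ≤ Z.card := Finset.card_pos.mpr hne
    omega
  have hsd : (A \ B).card + B.card = A.card := by
    rw [Finset.card_sdiff_of_subset hBA]
    have := Finset.card_le_card hBA
    omega
  rw [hclaim1]
  omega

/-- The map to subsets of `[1, n-2]`. -/
noncomputable def Phi (n : ℕ) (Z : Finset (Fin n)) : Finset ℕ :=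
  if Z = ∅ then ∅
  else insert (Z.sup (rw n)) (Finset.Icc 1 (Z.sup (rw n)) \ Z.image (rw n))

lemma count_subsets (hn : 2 ≤ n) (k : ℕ) :
    (univ.filter (fun Z : Finset (Fin n) =>
        (∀ z ∈ Z, (z : ℕ) < n - 2) ∧ (cntSet Z).card = k)).card
      = Nat.choose (n - 2) k := by
  have hicc : (Finset.Icc 1 (n - 2)).card = n - 2 := by
    rw [Nat.card_Icc]; omega
  have hgoal : ((Finset.Icc 1 (n - 2)).powersetCard k).card = Nat.choose (n - 2) k := by
    rw [Finset.card_powersetCard, hicc]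
  rw [← hgoal]
  apply Finset.card_bij (fun Z _ => Phi n Z)
  · -- well-defined
    intro Z hZ
    obtain ⟨hsub, hcnt⟩ := (Finset.mem_filter.mp hZ).2
    rw [Finset.mem_powersetCard]
    by_cases hZe : Z = ∅
    · rw [Phi, if_pos hZe]
      subst hZe
      rw [cntSet_empty] at hcnt
      simp at hcnt
      simp [hcnt.symm]
    · have hne : Z.Nonempty := Finset.nonempty_iff_ne_empty.mpr hZe
      rw [Phi, if_neg hZe]
      set R := Z.sup (rw n) with hR
      obtain ⟨z0, hz0Z, hz0⟩ := Finset.exists_mem_eq_sup Z hne (rw n)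
      have hz0' : R = rw n z0 := hR.trans hz0
      have hRle : R ≤ n - 2 := by
        rw [hz0']; exact rr_le (by have := hsub z0 hz0Z; omega)
      have hRpos : 1 ≤ R := by rw [hz0']; exact rr_pos (hsub z0 hz0Z)
      have hYsub : Z.image (rw n) ⊆ Finset.Icc 1 R := by
        intro y hy
        obtain ⟨z, hz, rfl⟩ := Finset.mem_image.mp hy
        rw [Finset.mem_Icc]
        exact ⟨rr_pos (hsub z hz), Finset.le_sup hz⟩
      have hRY : R ∈ Z.image (rw n) := Finset.mem_image.mpr ⟨z0, hz0Z, hz0.symm⟩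
      constructor
      · intro u hu
        rcases Finset.mem_insert.mp hu with rfl | hu
        · rw [Finset.mem_Icc]; exact ⟨hRpos, hRle⟩
        · have := Finset.mem_sdiff.mp hu |>.1
          rw [Finset.mem_Icc] at this ⊢
          omega
      · have hnotin : R ∉ Finset.Icc 1 R \ Z.image (rw n) := by
          rw [Finset.mem_sdiff]
          tauto
        rw [Finset.card_insert_of_notMem hnotin, Finset.card_sdiff_of_subset hYsub]
        have hinj : (Z.image (rw n)).card = Z.card := by
          apply Finset.card_image_of_injOn
          intro a ha b hb hab
          exact Fin.ext (rr_inj (by have := hsub a ha; omega)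
            (by have := hsub b hb; omega) hab)
        have hcc := cnt_card hn hsub hne
        have hZle : Z.card ≤ R := by
          have := Finset.card_le_card hYsub
          rw [hinj] at this
          rw [Nat.card_Icc] at this
          omega
        rw [Nat.card_Icc, hinj]
        omega
  · -- injective
    intro Z1 hZ1 Z2 hZ2 hPhi
    have hsub1 := (Finset.mem_filter.mp hZ1).2.1
    have hsub2 := (Finset.mem_filter.mp hZ2).2.1
    by_cases h1 : Z1 = ∅ <;> by_cases h2 : Z2 = ∅
    · rw [h1, h2]
    · exfalso
      rw [Phi, if_pos h1, Phi, if_neg h2] at hPhi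
      exact (Finset.insert_ne_empty _ _) hPhi.symm
    · exfalso
      rw [Phi, if_neg h1, Phi, if_pos h2] at hPhi
      exact (Finset.insert_ne_empty _ _) hPhi
    · have hne1 : Z1.Nonempty := Finset.nonempty_iff_ne_empty.mpr h1
      have hne2 : Z2.Nonempty := Finset.nonempty_iff_ne_empty.mpr h2
      rw [Phi, if_neg h1, Phi, if_neg h2] at hPhi
      set R1 := Z1.sup (rw n) with hR1
      set R2 := Z2.sup (rw n) with hR2
      obtain ⟨z1, hz1Z, hz1⟩ := Finset.exists_mem_eq_sup Z1 hne1 (rw n)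
      obtain ⟨z2, hz2Z, hz2⟩ := Finset.exists_mem_eq_sup Z2 hne2 (rw n)
      have hY1 : Z1.image (rw n) ⊆ Finset.Icc 1 R1 := by
        intro y hy
        obtain ⟨z, hz, rfl⟩ := Finset.mem_image.mp hy
        rw [Finset.mem_Icc]
        exact ⟨rr_pos (hsub1 z hz), Finset.le_sup hz⟩
      have hY2 : Z2.image (rw n) ⊆ Finset.Icc 1 R2 := by
        intro y hy
        obtain ⟨z, hz, rfl⟩ := Finset.mem_image.mp hy
        rw [Finset.mem_Icc]
        exact ⟨rr_pos (hsub2 z hz), Finset.le_sup hz⟩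
      have hmax1 : ∀ u ∈ insert R1 (Finset.Icc 1 R1 \ Z1.image (rw n)), u ≤ R1 := by
        intro u hu
        rcases Finset.mem_insert.mp hu with rfl | hu
        · exact le_refl _
        · have := (Finset.mem_sdiff.mp hu).1
          rw [Finset.mem_Icc] at this
          omega
      have hmax2 : ∀ u ∈ insert R2 (Finset.Icc 1 R2 \ Z2.image (rw n)), u ≤ R2 := by
        intro u hu
        rcases Finset.mem_insert.mp hu with rfl | hu
        · exact le_refl _
        · have := (Finset.mem_sdiff.mp hu).1
          rw [Finset.mem_Icc] at this
          omega
      have hRR : R1 = R2 := by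
        have h12 : R1 ≤ R2 := hmax2 R1 (hPhi ▸ Finset.mem_insert_self _ _)
        have h21 : R2 ≤ R1 := hmax1 R2 (hPhi ▸ Finset.mem_insert_self _ _)
        omega
      have hYY : Z1.image (rw n) = Z2.image (rw n) := by
        have key : ∀ (Za Zb : Finset (Fin n)), Za.Nonempty → Zb.Nonempty →
            (∀ z ∈ Za, (z : ℕ) < n - 2) → (∀ z ∈ Zb, (z : ℕ) < n - 2) →
            Za.sup (rw n) = Zb.sup (rw n) →
            insert (Za.sup (rw n)) (Finset.Icc 1 (Za.sup (rw n)) \ Za.image (rw n)) =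
            insert (Zb.sup (rw n)) (Finset.Icc 1 (Zb.sup (rw n)) \ Zb.image (rw n)) →
            Za.image (rw n) ⊆ Zb.image (rw n) := by
          intro Za Zb hnea hneb hsa hsb hReq hPeq y hy
          obtain ⟨z, hz, rfl⟩ := Finset.mem_image.mp hy
          by_cases hyR : rw n z = Zb.sup (rw n)
          · obtain ⟨zb, hzbZ, hzb⟩ := Finset.exists_mem_eq_sup Zb hneb (rw n)
            exact Finset.mem_image.mpr ⟨zb, hzbZ, by omega⟩
          · by_contra hyY
            have hyIcc : rw n z ∈ Finset.Icc 1 (Zb.sup (rw n)) := by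
              rw [Finset.mem_Icc]
              refine ⟨rr_pos (hsa z hz), ?_⟩
              rw [← hReq]
              exact Finset.le_sup hz
            have : rw n z ∈ insert (Zb.sup (rw n))
                (Finset.Icc 1 (Zb.sup (rw n)) \ Zb.image (rw n)) := by
              exact Finset.mem_insert.mpr (Or.inr (Finset.mem_sdiff.mpr ⟨hyIcc, hyY⟩))
            rw [← hPeq] at this
            rcases Finset.mem_insert.mp this with h | h
            · rw [hReq] at h; exact hyR h
            · exact (Finset.mem_sdiff.mp h).2 (Finset.mem_image.mpr ⟨z, hz, rfl⟩)
        apply Finset.Subset.antisymm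
        · exact key Z1 Z2 hne1 hne2 hsub1 hsub2 hRR hPhi
        · exact key Z2 Z1 hne2 hne1 hsub2 hsub1 hRR.symm hPhi.symm
      ext z
      constructor
      · intro hz
        have : rw n z ∈ Z2.image (rw n) := hYY ▸ Finset.mem_image.mpr ⟨z, hz, rfl⟩
        obtain ⟨z', hz', hzz⟩ := Finset.mem_image.mp this
        have : z' = z := Fin.ext (rr_inj (by have := hsub2 z' hz'; omega)
          (by have := hsub1 z hz; omega) hzz)
        exact this ▸ hz'
      · intro hz
        have : rw n z ∈ Z1.image (rw n) := hYY.symm ▸ Finset.mem_image.mpr ⟨z, hz, rfl⟩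
        obtain ⟨z', hz', hzz⟩ := Finset.mem_image.mp this
        have : z' = z := Fin.ext (rr_inj (by have := hsub1 z' hz'; omega)
          (by have := hsub2 z hz; omega) hzz)
        exact this ▸ hz'
  · -- surjective
    intro U hU
    rw [Finset.mem_powersetCard] at hU
    obtain ⟨hUsub, hUcard⟩ := hU
    by_cases hk : k = 0
    · refine ⟨∅, ?_, ?_⟩
      · rw [Finset.mem_filter]
        refine ⟨Finset.mem_univ _, fun z hz => absurd hz (Finset.notMem_empty z), ?_⟩
        rw [cntSet_empty, hk]
        simp
      · rw [Phi, if_pos rfl]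
        rw [hk] at hUcard
        exact (Finset.card_eq_zero.mp hUcard).symm
    · have hUne : U.Nonempty := Finset.card_pos.mp (by omega)
      set m := U.max' hUne with hm
      have hmU : m ∈ U := U.max'_mem hUne
      have hmIcc := hUsub hmU
      rw [Finset.mem_Icc] at hmIcc
      have hUIcc : U ⊆ Finset.Icc 1 m := by
        intro u hu
        rw [Finset.mem_Icc]
        have := hUsub hu
        rw [Finset.mem_Icc] at this
        exact ⟨this.1, Finset.le_max' U u hu⟩
      set Y := insert m (Finset.Icc 1 m \ U) with hY
      set Z := univ.filter (fun z : Fin n => (z : ℕ) < n - 2 ∧ rr (n - 2) (z : ℕ) ∈ Y)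
        with hZ
      have hsub : ∀ z ∈ Z, (z : ℕ) < n - 2 := fun z hz => (Finset.mem_filter.mp hz).2.1
      have hYIcc : Y ⊆ Finset.Icc 1 m := by
        intro y hy
        rcases Finset.mem_insert.mp hy with rfl | hy
        · rw [Finset.mem_Icc]; omega
        · exact (Finset.mem_sdiff.mp hy).1
      have himg : Z.image (rw n) = Y := by
        apply Finset.Subset.antisymm
        · intro y hy
          obtain ⟨z, hz, rfl⟩ := Finset.mem_image.mp hy
          exact (Finset.mem_filter.mp hz).2.2
        · intro y hy
          have hyb := hYIcc hy
          rw [Finset.mem_Icc] at hyb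
          obtain ⟨zv, hzv1, hzv2⟩ := rr_surj hyb.1 (by omega : y ≤ n - 2)
          refine Finset.mem_image.mpr ⟨⟨zv, by omega⟩, ?_, ?_⟩
          · rw [hZ, Finset.mem_filter]
            refine ⟨Finset.mem_univ _, by simp; omega, ?_⟩
            simp only [Fin.val_mk]
            rw [hzv2]
            exact hy
          · unfold rw
            simp only [Fin.val_mk]
            exact hzv2
      have hZne : Z.Nonempty := by
        have : m ∈ Z.image (rw n) := himg ▸ Finset.mem_insert_self _ _
        obtain ⟨z, hz, -⟩ := Finset.mem_image.mp this
        exact ⟨z, hz⟩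
      have hZe : Z ≠ ∅ := Finset.nonempty_iff_ne_empty.mp hZne
      have hsup : Z.sup (rw n) = m := by
        have h1 : Z.sup (rw n) = (Z.image (rw n)).sup id := by
          rw [Finset.sup_image]
          rfl
        rw [h1, himg]
        apply le_antisymm
        · apply Finset.sup_le
          intro y hy
          have := hYIcc hy
          rw [Finset.mem_Icc] at this
          exact this.2
        · exact Finset.le_sup (f := id) (Finset.mem_insert_self _ _)
      have hinj : (Z.image (rw n)).card = Z.card := by
        apply Finset.card_image_of_injOn
        intro a ha b hb hab
        exact Fin.ext (rr_inj (by have := hsub a ha; omega)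
          (by have := hsub b hb; omega) hab)
      have hcardY : Y.card = 1 + (m - k) := by
        rw [hY, Finset.card_insert_of_notMem (by
          rw [Finset.mem_sdiff]
          tauto), Finset.card_sdiff_of_subset hUIcc, Nat.card_Icc, hUcard]
        omega
      have hkm : k ≤ m := by
        have := Finset.card_le_card hUIcc
        rw [Nat.card_Icc] at this
        omega
      refine ⟨Z, ?_, ?_⟩
      · rw [Finset.mem_filter]
        refine ⟨Finset.mem_univ _, hsub, ?_⟩
        have hcc := cnt_card hn hsub hZne
        rw [hsup] at hcc
        have : Z.card = 1 + (m - k) := by rw [← hinj, himg, hcardY]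
        omega
      · rw [Phi, if_neg hZe, hsup, himg]
        have hsd : Finset.Icc 1 m \ Y = U \ {m} := by
          ext u
          simp only [hY, Finset.mem_sdiff, Finset.mem_insert, Finset.mem_Icc,
            Finset.mem_singleton]
          constructor
          · rintro ⟨h1, h2⟩
            push_neg at h2
            exact ⟨h2.2 h1, h2.1⟩
          · rintro ⟨h1, h2⟩
            have h3 := hUIcc h1
            rw [Finset.mem_Icc] at h3
            refine ⟨h3, ?_⟩
            push_neg
            exact ⟨h2, fun _ => h1⟩
        rw [hsd]
        ext u
        rw [Finset.mem_insert, Finset.mem_sdiff, Finset.mem_singleton]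
        constructor
        · rintro (rfl | ⟨h, _⟩)
          · exact hmU
          · exact h
        · intro hu
          by_cases h : u = m
          · exact Or.inl h
          · exact Or.inr ⟨hu, h⟩
      
end Counting

lemma main_count (n k : ℕ) (hn : 2 ≤ n) :
    (Finset.univ.filter (fun σ : Equiv.Perm (Fin n) =>
        avoids123 σ ∧ avoids132 σ ∧
          σ (⟨n - 2, Nat.sub_lt_self two_pos hn⟩ : Fin n) = (⟨0, Nat.lt_of_lt_of_le two_pos hn⟩ : Fin n) ∧ crs σ = k)).card =
      Nat.choose (n - 2) k := by
  rw [← count_subsets hn k]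
  apply Finset.card_bij (fun σ _ => Zset σ)
  · intro σ hσ
    obtain ⟨h123, h132, h0, hcrs⟩ := (Finset.mem_filter.mp hσ).2
    have hg := family_good hn h123 h132 h0
    rw [Finset.mem_filter]
    refine ⟨Finset.mem_univ _, fun z hz => (mem_Zset.mp hz).1, ?_⟩
    rw [← crs_good hn hg]
    exact hcrs
  · intro σ1 hσ1 σ2 hσ2 hZeq
    obtain ⟨h123a, h132a, h0a, -⟩ := (Finset.mem_filter.mp hσ1).2
    obtain ⟨h123b, h132b, h0b, -⟩ := (Finset.mem_filter.mp hσ2).2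
    have hg1 := family_good hn h123a h132a h0a
    have hg2 := family_good hn h123b h132b h0b
    exact good_unique hn hg1 (show Good σ2 (Zset σ1) by rw [hZeq]; exact hg2)
  · intro Z hZ
    obtain ⟨hsub, hcnt⟩ := (Finset.mem_filter.mp hZ).2
    have hg := sigmaZ_good hn Z hsub
    refine ⟨sigmaZ hn Z, ?_, hg.Zset_eq hn⟩
    rw [Finset.mem_filter]
    refine ⟨Finset.mem_univ _, (hg.avoids).1, (hg.avoids).2, ?_, ?_⟩
    · have hnm : (⟨n - 2, by omega⟩ : Fin n) ∉ Z := by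
        intro h
        have := hsub _ h
        simp at this
      have hval := hg.hoff ⟨n - 2, by omega⟩ (by simp) hnm
      apply Fin.ext
      simp only [Fin.val_mk] at hval ⊢
      omega
    · rw [crs_good hn hg]
      exact hcnt

end Cnt

theorem count_123_132_penultimate (n k : ℕ) (hn : 2 ≤ n) :
    (Finset.univ.filter (fun σ : Equiv.Perm (Fin n) =>
        avoids123 σ ∧ avoids132 σ ∧
          σ (⟨n - 2, by omega⟩ : Fin n) = (⟨0, by omega⟩ : Fin n) ∧ crs σ = k)).card =
      Nat.choose (n - 2) k := by
  exact Cnt.main_count n k hn
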